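/- Let A be a finite ordered alphabet, b ∈ A, and ξ_b: A^+ → A^+ the map that inserts an extra b into every maximal run of consecutive b's and inserts a b between any two adjacent letters d, d' that are both strictly larger than b or both strictly smaller than b. Then for all words x, x' with |x| = |x'|: x ≺ x' if and only if ξ_b(x) ≺ ξ_b(x'), where ≺ is the lexicographic order induced by the order on A. -/

import Mathlib

/-- The lexicographic order on words induced by the order of the alphabet, with the
convention that `u ≺ v` whenever `v` is a proper prefix of `u`. -/
def wlt {A : Type*} [LinearOrder A] (u v : List A) : Prop :=
  (v ≠ u ∧ v <+: u) ∨
    ∃ (p s t : List A) (x y : A), x < y ∧ u = p ++ x :: s ∧ v = p ++ y :: t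

/-- The alternating lexicographic order on words: at the first difference, the order of
letters is used at even (0-based) positions and reversed at odd positions; if `v` is a
proper prefix of `u` then `u ≺_alt v` when `|v|` is even and `v ≺_alt u` when `|v|` is odd. -/
def altlt {A : Type*} [LinearOrder A] (u v : List A) : Prop :=
  (v ≠ u ∧ v <+: u ∧ Even v.length) ∨ (u ≠ v ∧ u <+: v ∧ Odd u.length) ∨
    ∃ (p s t : List A) (x y : A), u = p ++ x :: s ∧ v = p ++ y :: t ∧
      ((Even p.length ∧ x < y) ∨ (Odd p.length ∧ y < x))

/-- `r` is a linear representation (rotation) of the cyclic word represented by `w`. -/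
def isRot {A : Type*} (w r : List A) : Prop := ∃ s t : List A, w = s ++ t ∧ r = t ++ s

/-- `f` is a factor of the cyclic word represented by `w`. -/
def isCFactor {A : Type*} (f w : List A) : Prop := ∃ r : List A, isRot w r ∧ f <:+: r

/-- The cyclic word represented by `w` is singular: every factorization of it into two
nonempty non-palindromes `u`, `v` is synchronizing (`u ≺ u*` iff `v ≺ v*`). -/
def cyclicSingular {A : Type*} [LinearOrder A] (w : List A) : Prop :=
  ∀ u v : List A, u ≠ [] → v ≠ [] → isRot w (u ++ v) →
    u ≠ u.reverse → v ≠ v.reverse → (wlt u u.reverse ↔ wlt v v.reverse)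

/-- `δ_b(w) = Σ_{c>b} |w|_c − Σ_{a<b} |w|_a`. -/
def deltaW {A : Type*} [LinearOrder A] [Fintype A] (w : List A) (b : A) : ℤ :=
  (∑ c ∈ Finset.univ.filter (fun c => b < c), (w.count c : ℤ)) -
    (∑ a ∈ Finset.univ.filter (fun a => a < b), (w.count a : ℤ))

/-- Helper for `ξ_b`: scans adjacent pairs, inserting `b` before the start of each run of
`b`'s and between adjacent letters that are both `> b` or both `< b`. -/
def xiAux {A : Type*} [LinearOrder A] (b : A) : List A → List A
  | [] => []
  | [d] => [d]
  | d :: d' :: l =>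
    if (d ≠ b ∧ d' = b) ∨ (d < b ∧ d' < b) ∨ (b < d ∧ b < d') then
      d :: b :: xiAux b (d' :: l)
    else
      d :: xiAux b (d' :: l)

/-- `ξ_b(x)`: the word obtained from `x` by adding one occurrence of `b` to every maximal
run of consecutive `b`'s and inserting `b` between any two adjacent letters that are both
strictly larger than `b` or both strictly smaller than `b`. -/
def xi {A : Type*} [LinearOrder A] (b : A) (x : List A) : List A :=
  if x.head? = some b then b :: xiAux b x else xiAux b x

section Stmt16Aux
variable {A : Type*} [LinearOrder A]

lemma wlt_cons {a : A} {u v : List A} (h : wlt u v) : wlt (a :: u) (a :: v) := by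
  rcases h with ⟨hne, hpre⟩ | ⟨p, s, t, x, y, hxy, hu, hv⟩
  · exact Or.inl ⟨by simpa using hne, List.cons_prefix_cons.2 ⟨rfl, hpre⟩⟩
  · exact Or.inr ⟨a :: p, s, t, x, y, hxy, by simp [hu], by simp [hv]⟩

lemma xiAux_cons (b d : A) (l : List A) : ∃ u, xiAux b (d :: l) = d :: u := by
  cases l with
  | nil => exact ⟨[], rfl⟩
  | cons e m =>
    simp only [xiAux]
    split
    · exact ⟨_, rfl⟩
    · exact ⟨_, rfl⟩

lemma cond_lemma1 {b d c c' : A} (h : c < c')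
    (h1 : (d ≠ b ∧ c = b) ∨ (d < b ∧ c < b) ∨ (b < d ∧ b < c))
    (h2 : ¬ ((d ≠ b ∧ c' = b) ∨ (d < b ∧ c' < b) ∨ (b < d ∧ b < c'))) : b < c' := by
  push_neg at h2
  rcases h1 with ⟨hd, hc⟩ | ⟨hd, hc⟩ | ⟨hd, hc⟩
  · exact hc ▸ h
  · exact lt_of_le_of_ne (h2.2.1 hd) (Ne.symm (h2.1 (ne_of_lt hd)))
  · exact lt_trans hc h

lemma cond_lemma2 {b d c c' : A} (h : c < c')
    (h1 : ¬ ((d ≠ b ∧ c = b) ∨ (d < b ∧ c < b) ∨ (b < d ∧ b < c)))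
    (h2 : (d ≠ b ∧ c' = b) ∨ (d < b ∧ c' < b) ∨ (b < d ∧ b < c')) : c < b := by
  push_neg at h1
  rcases h2 with ⟨hd, hc⟩ | ⟨hd, hc⟩ | ⟨hd, hc⟩
  · exact hc ▸ h
  · exact lt_trans h hc
  · exact lt_of_le_of_ne (h1.2.2 hd) (h1.1 (ne_of_gt hd))

lemma xiAux_main (b : A) (p : List A) : ∀ c c' : A, ∀ s t : List A, c < c' →
    wlt (xiAux b (p ++ c :: s)) (xiAux b (p ++ c' :: t)) := by
  induction p with
  | nil =>
    intro c c' s t h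
    obtain ⟨u, hu⟩ := xiAux_cons b c s
    obtain ⟨v, hv⟩ := xiAux_cons b c' t
    exact Or.inr ⟨[], u, v, c, c', h, by simpa using hu, by simpa using hv⟩
  | cons d p2 ih =>
    intro c c' s t h
    cases p2 with
    | nil =>
      simp only [List.nil_append, List.cons_append, xiAux]
      obtain ⟨u, hu⟩ := xiAux_cons b c s
      obtain ⟨v, hv⟩ := xiAux_cons b c' t
      by_cases h1 : (d ≠ b ∧ c = b) ∨ (d < b ∧ c < b) ∨ (b < d ∧ b < c) <;>
        by_cases h2 : (d ≠ b ∧ c' = b) ∨ (d < b ∧ c' < b) ∨ (b < d ∧ b < c')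
      · rw [if_pos h1, if_pos h2]
        exact Or.inr ⟨[d, b], u, v, c, c', h, by simp [hu], by simp [hv]⟩
      · rw [if_pos h1, if_neg h2]
        exact Or.inr ⟨[d], xiAux b (c :: s), v, b, c', cond_lemma1 h h1 h2,
          by simp, by simp [hv]⟩
      · rw [if_neg h1, if_pos h2]
        exact Or.inr ⟨[d], u, xiAux b (c' :: t), c, b, cond_lemma2 h h1 h2,
          by simp [hu], by simp⟩
      · rw [if_neg h1, if_neg h2]
        exact Or.inr ⟨[d], u, v, c, c', h, by simp [hu], by simp [hv]⟩
    | cons e p3 =>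
      have key := ih c c' s t h
      simp only [List.cons_append, xiAux]
      split
      · exact wlt_cons (wlt_cons (by simpa using key))
      · exact wlt_cons (by simpa using key)

lemma xi_main (b : A) (p : List A) (c c' : A) (s t : List A) (h : c < c') :
    wlt (xi b (p ++ c :: s)) (xi b (p ++ c' :: t)) := by
  cases p with
  | nil =>
    simp only [List.nil_append]
    unfold xi
    simp only [List.head?_cons, Option.some.injEq]
    by_cases hc : c = b <;> by_cases hc' : c' = b
    · exact absurd (hc.trans hc'.symm ▸ h) (lt_irrefl _)
    · rw [if_pos (by rw [hc]), if_neg (by simpa using hc')]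
      obtain ⟨v, hv⟩ := xiAux_cons b c' t
      exact Or.inr ⟨[], xiAux b (c :: s), v, b, c', hc ▸ h, rfl, by simp [hv]⟩
    · rw [if_neg (by simpa using hc), if_pos (by rw [hc'])]
      obtain ⟨u, hu⟩ := xiAux_cons b c s
      exact Or.inr ⟨[], u, xiAux b (c' :: t), c, b, hc' ▸ h, by simp [hu], rfl⟩
    · rw [if_neg (by simpa using hc), if_neg (by simpa using hc')]
      exact xiAux_main b [] c c' s t h
  | cons d p2 =>
    simp only [List.cons_append]
    unfold xi
    simp only [List.head?_cons, Option.some.injEq]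
    have key := xiAux_main b (d :: p2) c c' s t h
    simp only [List.cons_append] at key
    split_ifs
    · exact wlt_cons key
    · exact key
lemma wlt_irrefl (u : List A) : ¬ wlt u u := by
  rintro (⟨hne, _⟩ | ⟨p, s, t, x, y, hxy, hu, hv⟩)
  · exact hne rfl
  · rw [hu] at hv
    have := List.append_cancel_left hv
    simp only [List.cons.injEq] at this
    exact absurd (this.1 ▸ hxy) (lt_irrefl _)

lemma split_tri {p q s t : List A} {x y : A} (h : p ++ x :: s = q ++ y :: t) :
    (p = q ∧ x = y ∧ s = t) ∨ (∃ r, q = p ++ x :: r) ∨ ∃ r, p = q ++ y :: r := by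
  rcases List.append_eq_append_iff.1 h with ⟨a', hq, hxs⟩ | ⟨c', hp, hyt⟩
  · cases a' with
    | nil =>
      simp only [List.append_nil] at hq
      simp only [List.nil_append, List.cons.injEq] at hxs
      exact Or.inl ⟨hq.symm, hxs.1, hxs.2⟩
    | cons z r =>
      simp only [List.cons_append, List.cons.injEq] at hxs
      exact Or.inr (Or.inl ⟨r, by rw [hq, hxs.1]⟩)
  · cases c' with
    | nil =>
      simp only [List.append_nil] at hp
      simp only [List.nil_append, List.cons.injEq] at hyt
      exact Or.inl ⟨hp, hyt.1.symm, hyt.2.symm⟩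
    | cons z r =>
      simp only [List.cons_append, List.cons.injEq] at hyt
      exact Or.inr (Or.inr ⟨r, by rw [hp, hyt.1]⟩)

lemma wlt_asymm {u v : List A} (h1 : wlt u v) (h2 : wlt v u) : False := by
  rcases h1 with ⟨hne1, hpre1⟩ | ⟨p, s, t, x, y, hxy, hu, hv⟩
  · rcases h2 with ⟨hne2, hpre2⟩ | ⟨q, s', t', x', y', hxy', hv', hu'⟩
    · exact hne1 (hpre1.eq_of_length (le_antisymm hpre1.length_le hpre2.length_le))
    · rw [hv', hu'] at hpre1
      rw [List.prefix_append_right_inj, List.cons_prefix_cons] at hpre1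
      exact absurd (hpre1.1 ▸ hxy') (lt_irrefl _)
  · rcases h2 with ⟨hne2, hpre2⟩ | ⟨q, s', t', x', y', hxy', hv', hu'⟩
    · rw [hu, hv] at hpre2
      rw [List.prefix_append_right_inj, List.cons_prefix_cons] at hpre2
      exact absurd (hpre2.1 ▸ hxy) (lt_irrefl _)
    · rw [hu] at hu'
      rcases split_tri hu' with ⟨hpq, hxe, _⟩ | ⟨r, hr⟩ | ⟨r, hr⟩
      · subst hpq
        have h3 : p ++ y :: t = p ++ x' :: s' := hv.symm.trans hv'
        have h4 := List.append_cancel_left h3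
        simp only [List.cons.injEq] at h4
        have : x < x := by
          calc x < y := hxy
            _ = x' := h4.1
            _ < y' := hxy'
            _ = x := hxe.symm
        exact absurd this (lt_irrefl x)
      · rw [hr] at hv'
        have h3 : p ++ y :: t = p ++ x :: (r ++ x' :: s') := by
          rw [← hv, hv']; simp
        have h4 := List.append_cancel_left h3
        simp only [List.cons.injEq] at h4
        exact absurd (h4.1 ▸ hxy) (lt_irrefl _)
      · rw [hr] at hv
        have h3 : q ++ x' :: s' = q ++ y' :: (r ++ y :: t) := by
          rw [← hv', hv]; simp
        have h4 := List.append_cancel_left h3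
        simp only [List.cons.injEq] at h4
        exact absurd (h4.1 ▸ hxy') (lt_irrefl _)
lemma wlt_tri {x x' : List A} (hlen : x.length = x'.length) :
    x = x' ∨ wlt x x' ∨ wlt x' x := by
  induction x generalizing x' with
  | nil => cases x' with
    | nil => exact Or.inl rfl
    | cons c v => simp at hlen
  | cons a u ih =>
    cases x' with
    | nil => simp at hlen
    | cons c v =>
      simp only [List.length_cons, Nat.succ_inj] at hlen
      rcases lt_trichotomy a c with h | h | h
      · exact Or.inr (Or.inl (Or.inr ⟨[], u, v, a, c, h, rfl, rfl⟩))
      · subst h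
        rcases ih hlen with h | h | h
        · exact Or.inl (by rw [h])
        · exact Or.inr (Or.inl (wlt_cons h))
        · exact Or.inr (Or.inr (wlt_cons h))
      · exact Or.inr (Or.inr (Or.inr ⟨[], v, u, c, a, h, rfl, rfl⟩))


lemma xi_forward (b : A) {x x' : List A} (hlen : x.length = x'.length)
    (h : wlt x x') : wlt (xi b x) (xi b x') := by
  rcases h with ⟨hne, hpre⟩ | ⟨p, s, t, c, c', hcc, hx, hx'⟩
  · exact absurd (hpre.eq_of_length hlen.symm) hne
  · rw [hx, hx']
    exact xi_main b p c c' s t hcc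

end Stmt16Aux

theorem stmt16 {A : Type*} [LinearOrder A] (b : A) (x x' : List A)
    (hlen : x.length = x'.length) :
    wlt x x' ↔ wlt (xi b x) (xi b x') := by
  constructor
  · exact xi_forward b hlen
  · intro h
    rcases wlt_tri hlen with he | hw | hw
    · subst he
      exact absurd h (wlt_irrefl _)
    · exact hw
    · exact absurd h (fun h2 => wlt_asymm h2 (xi_forward b hlen.symm hw))
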